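/- Let (v_n)_{n≥0} satisfy 1 = v_0 ≤ v_1 ≤ v_2 ≤ ⋯ and, with the convention v_{-1} = 0, the condition v_{n-2} v_{2p-1} + v_{2p-3} v_{n-2p} = v_n v_{2p-3} + v_{2p-1} v_{n-2p} for all n ≥ 2 and p ≥ 1 with 2p ≤ n. Fix b_0 > 0 and set b_{n-1} = b_0 √(v_{n-1}(v_n − v_{n-2})/v_1) for n ≥ 2, and let ψ_0(x) = 1, ψ_1(x) = x/b_0, and b_n ψ_{n+1}(x) = x ψ_n(x) − b_{n-1} ψ_{n-1}(x) for n ≥ 1. Let B̄₁ be the operator B̄₁ p(x) = Σ_{k≥2} ε_k x^k p^{(k)}(x), where (ε_k) is the sequence determined by v. Then the following are equivalent: (a) there exist real sequences (δ_n)_{n≥2} and (β_n)_{n≥3} such that B̄₁ ψ_2 = δ_2 x ψ_1 and B̄₁ ψ_n = δ_n x ψ_{n-1} + β_n ψ_{n-2} for all n ≥ 3; (b) v_{2p+1} = (p+1) v_1 for all p ≥ 1 and v_{2m} = m v_2 − (m−1) for all m ≥ 2. -/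

import Mathlib

open Polynomial Finset

/-- Extension of a sequence `v : ℕ → ℝ` to integer indices by `0`
(the convention `v_{-1} = 0`). -/
noncomputable def vext (v : ℕ → ℝ) : ℤ → ℝ := fun n => if 0 ≤ n then v n.toNat else 0

/-- The operator `B̄₁ p (x) = ∑_{k ≥ 2} ε_k x^k p^{(k)}(x)`
(a finite sum on each polynomial). -/
noncomputable def B1bar (ε : ℕ → ℝ) (p : Polynomial ℝ) : Polynomial ℝ :=
  ∑ k ∈ Finset.Icc 2 p.natDegree, C (ε k) * X ^ k * derivative^[k] p



noncomputable def lam (v : ℕ → ℝ) (m : ℕ) : ℝ := if m = 0 then 0 else v (m - 1) - m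

lemma sum_eps (v ε : ℕ → ℝ) (hε1 : ε 1 = 1)
    (hεk : ∀ k : ℕ, 2 ≤ k →
      ε k = v (k - 1) / (Nat.factorial k : ℝ)
        - ∑ j ∈ Finset.Icc 1 (k - 1), ε j / (Nat.factorial (k - j) : ℝ)) (hv0 : v 0 = 1) :
    ∀ m : ℕ, 1 ≤ m → ∑ j ∈ Finset.Icc 1 m, ε j * (m.descFactorial j : ℝ) = v (m - 1) := by
  intro m hm
  rcases Nat.lt_or_ge m 2 with h2 | h2
  · interval_cases m
    simp [hε1, hv0]
  · obtain ⟨m', rfl⟩ : ∃ m', m = m' + 1 := ⟨m - 1, by omega⟩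
    rw [Finset.sum_Icc_succ_top (by omega)]
    have hε := hεk (m' + 1) (by omega)
    simp only [Nat.add_sub_cancel] at hε ⊢
    have hfac : ∀ j ∈ Finset.Icc 1 m', (((m' + 1).descFactorial j : ℝ))
        = ((m' + 1).factorial : ℝ) / ((m' + 1 - j).factorial : ℝ) := by
      intro j hj
      simp only [Finset.mem_Icc] at hj
      have h := Nat.factorial_mul_descFactorial (n := m' + 1) (k := j) (by omega)
      field_simp
      rw [mul_comm]
      exact_mod_cast h
    rw [Finset.sum_congr rfl (fun j hj => by rw [hfac j hj])]
    rw [hε, Nat.descFactorial_self]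
    have hfne : ((m' + 1).factorial : ℝ) ≠ 0 := by positivity
    rw [Finset.sum_congr rfl (fun j (hj : j ∈ Finset.Icc 1 m') =>
      (by ring : ε j * (((m' + 1).factorial : ℝ) / ((m' + 1 - j).factorial : ℝ))
        = ε j / ((m' + 1 - j).factorial : ℝ) * ((m' + 1).factorial : ℝ))), ← Finset.sum_mul,
      sub_mul, div_mul_cancel₀ _ hfne]
    ring




lemma coeff_B1bar (v ε : ℕ → ℝ) (hv0 : v 0 = 1)
    (hsum : ∀ m : ℕ, 1 ≤ m → ∑ j ∈ Finset.Icc 1 m, ε j * (m.descFactorial j : ℝ) = v (m - 1))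
    (hε1 : ε 1 = 1) (p : Polynomial ℝ) (m : ℕ) :
    (B1bar ε p).coeff m = lam v m * p.coeff m := by
  unfold B1bar
  rw [finset_sum_coeff]
  have hterm : ∀ k, (C (ε k) * X ^ k * derivative^[k] p).coeff m
      = ε k * (if k ≤ m then (m.descFactorial k : ℝ) * p.coeff m else 0) := by
    intro k
    rw [mul_assoc, coeff_C_mul, coeff_X_pow_mul']
    congr 1
    split_ifs with h
    · rw [coeff_iterate_derivative, Nat.sub_add_cancel h, nsmul_eq_mul]
    · rfl
  rw [Finset.sum_congr rfl (fun k _ => hterm k)]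
  by_cases hpm : p.coeff m = 0
  · simp [hpm, lam]
  · have hmd : m ≤ p.natDegree := le_natDegree_of_ne_zero hpm
    rcases Nat.lt_or_ge m 2 with h2 | h2
    · rw [Finset.sum_eq_zero (fun k hk => by
        simp only [Finset.mem_Icc] at hk
        rw [if_neg (by omega), mul_zero])]
      unfold lam
      rcases Nat.lt_or_ge m 1 with h1 | h1
      · rw [if_pos (by omega), zero_mul]
      · rw [if_neg (by omega)]
        have : m = 1 := by omega
        subst this
        simp [hv0]
    · rw [← Finset.sum_subset (Finset.Icc_subset_Icc_right hmd)
        (fun k hk hk2 => by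
          simp only [Finset.mem_Icc] at hk hk2
          rw [if_neg (by omega), mul_zero])]
      rw [Finset.sum_congr rfl (fun k hk => by
        simp only [Finset.mem_Icc] at hk
        rw [if_pos hk.2, ← mul_assoc])]
      rw [← Finset.sum_mul]
      unfold lam
      rw [if_neg (by omega)]
      congr 1
      have h1 := hsum m (by omega)
      have hins : Finset.Icc 1 m = insert 1 (Finset.Icc 2 m) := by
        ext x; simp only [Finset.mem_Icc, Finset.mem_insert]; omega
      rw [hins, Finset.sum_insert (by simp)] at h1
      rw [hε1, Nat.descFactorial_one] at h1
      linarith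


set_option linter.unusedSectionVars false
section psis
variable (b : ℕ → ℝ) (ψ : ℕ → Polynomial ℝ)

lemma coeff_rec (hψ : ∀ n : ℕ, 1 ≤ n →
      C (b n) * ψ (n + 1) = X * ψ n - C (b (n - 1)) * ψ (n - 1))
    (n : ℕ) (hn : 1 ≤ n) (m : ℕ) :
    b n * (ψ (n+1)).coeff m = (X * ψ n).coeff m - b (n-1) * (ψ (n-1)).coeff m := by
  have h := congrArg (fun q : Polynomial ℝ => q.coeff m) (hψ n hn)
  simpa using h

variable (hψ0 : ψ 0 = 1) (hψ1 : ψ 1 = C (1 / b 0) * X)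
  (hψ : ∀ n : ℕ, 1 ≤ n →
      C (b n) * ψ (n + 1) = X * ψ n - C (b (n - 1)) * ψ (n - 1))
  (hb0 : b 0 ≠ 0) (hb1 : b 1 ≠ 0) (hb2 : b 2 ≠ 0) (hb3 : b 3 ≠ 0)

include hψ1 in
lemma c1 : ∀ m, (ψ 1).coeff m = if m = 1 then (b 0)⁻¹ else 0 := by
  intro m
  rw [hψ1]
  match m with
  | 0 => simp
  | 1 => simp [one_div]
  | (m+2) => simp [coeff_C_mul, coeff_X]

include hψ0 hψ1 hψ hb0 hb1 in
lemma c2 : ∀ m, (ψ 2).coeff m =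
    if m = 2 then (b 0 * b 1)⁻¹ else if m = 0 then -(b 0 * (b 1)⁻¹) else 0 := by
  intro m
  have h := coeff_rec b ψ hψ 1 le_rfl m
  norm_num [hψ0] at h
  match m with
  | 0 =>
    rw [Polynomial.mul_coeff_zero, coeff_X_zero, zero_mul, Polynomial.coeff_one] at h
    norm_num at h ⊢
    rw [show -(b 0 * (b 1)⁻¹) = -b 0 / b 1 by ring, eq_div_iff hb1]
    linarith
  | (m+1) =>
    rw [coeff_X_mul, c1 b ψ hψ1, Polynomial.coeff_one] at h
    match m with
    | 0 => norm_num at h ⊢; tauto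
    | 1 =>
      norm_num at h ⊢
      rw [show ((b 1)⁻¹ * (b 0)⁻¹ : ℝ) = (b 0)⁻¹ / b 1 by ring, eq_div_iff hb1]
      linarith
    | (m+2) =>
      rw [if_neg (by omega)] at h
      norm_num at h ⊢
      tauto

include hψ0 hψ1 hψ hb0 hb1 hb2 in
lemma c3 : ∀ m, (ψ 3).coeff m =
    if m = 3 then 1 / (b 0 * b 1 * b 2)
    else if m = 1 then -((b 0^2 + b 1^2) / (b 0 * b 1 * b 2)) else 0 := by
  intro m
  have h := coeff_rec b ψ hψ 2 (by omega) m
  norm_num [c1 b ψ hψ1] at h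
  match m with
  | 0 =>
    rw [Polynomial.mul_coeff_zero, coeff_X_zero, zero_mul] at h
    norm_num at h ⊢
    tauto
  | (m+1) =>
    rw [coeff_X_mul, c2 b ψ hψ0 hψ1 hψ hb0 hb1] at h
    match m with
    | 0 =>
      norm_num at h ⊢
      field_simp at h ⊢
      linarith
    | 1 =>
      norm_num at h ⊢
      tauto
    | 2 =>
      norm_num at h ⊢
      field_simp at h ⊢
      linarith
    | (m+3) =>
      rw [if_neg (by omega), if_neg (by omega)] at h
      norm_num at h ⊢
      tauto

include hψ0 hψ1 hψ hb0 hb1 hb2 hb3 in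
lemma c4 : ∀ m, (ψ 4).coeff m =
    if m = 4 then 1 / (b 0 * b 1 * b 2 * b 3)
    else if m = 2 then -((b 0^2 + b 1^2 + b 2^2) / (b 0 * b 1 * b 2 * b 3))
    else if m = 0 then b 0 * b 2 / (b 1 * b 3) else 0 := by
  intro m
  have h := coeff_rec b ψ hψ 3 (by omega) m
  norm_num [c2 b ψ hψ0 hψ1 hψ hb0 hb1] at h
  match m with
  | 0 =>
    rw [Polynomial.mul_coeff_zero, coeff_X_zero, zero_mul] at h
    norm_num at h ⊢
    field_simp at h ⊢
    linarith
  | (m+1) =>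
    rw [coeff_X_mul, c3 b ψ hψ0 hψ1 hψ hb0 hb1 hb2] at h
    match m with
    | 0 =>
      norm_num at h ⊢
      tauto
    | 1 =>
      norm_num at h ⊢
      field_simp at h ⊢
      apply mul_right_cancel₀ (mul_ne_zero hb1 hb0)
      linear_combination (b 0 * b 1) * h
    | 2 =>
      norm_num at h ⊢
      tauto
    | 3 =>
      norm_num at h ⊢
      field_simp at h ⊢
      linarith
    | (m+4) =>
      simp only [if_neg (show ¬ m+4+1 = 2 by omega), if_neg (show ¬ m+4 = 3 by omega),
        if_neg (show ¬ m+4 = 1 by omega)] at h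
      norm_num at h ⊢
      simp only [if_neg (show ¬ m+4+1 = 4 by omega), if_neg (show ¬ m+4+1 = 2 by omega),
        if_neg (show ¬ m+4+1 = 0 by omega)]
      tauto

include hψ0 hψ1 hψ in
lemma parity (hbne : ∀ n, 1 ≤ n → b n ≠ 0) :
    ∀ n m : ℕ, m % 2 ≠ n % 2 → (ψ n).coeff m = 0 := by
  intro n
  induction n using Nat.strong_induction_on with
  | _ n ih =>
    match n with
    | 0 => intro m hm; rw [hψ0, Polynomial.coeff_one, if_neg (by omega)]
    | 1 => intro m hm; rw [c1 b ψ hψ1, if_neg (by omega)]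
    | (k+2) =>
      intro m hm
      have h := coeff_rec b ψ hψ (k+1) (by omega) m
      simp only [Nat.add_sub_cancel] at h
      match m with
      | 0 =>
        rw [Polynomial.mul_coeff_zero, coeff_X_zero, zero_mul,
          ih k (by omega) 0 (by omega)] at h
        have := hbne (k+1) (by omega)
        rcases mul_eq_zero.mp (by linarith : b (k+1) * (ψ (k+2)).coeff 0 = 0) with h' | h'
        · exact absurd h' this
        · exact h'
      | (m+1) =>
        rw [coeff_X_mul, ih (k+1) (by omega) m (by omega),
          ih k (by omega) (m+1) (by omega)] at h
        norm_num at h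
        rcases h with h' | h'
        · exact absurd h' (hbne (k+1) (by omega))
        · exact h'

include hψ0 hψ1 hψ hb0 in
lemma core (hbne : ∀ n, 1 ≤ n → b n ≠ 0)
    (f : ℕ → ℝ) (hf0 : f 0 = 0) (hf1 : f 1 = 0)
    (hf2 : f 2 * b 1 = b 0) (hf3 : f 3 * (b 1 * b 2) = b 0 ^ 2 + b 1 ^ 2)
    (hR1 : ∀ k : ℕ, f (k+4) * b (k+3) = b (k+2) + f (k+3) * b (k+1))
    (hR2 : ∀ k : ℕ, f (k+3) * b k = b (k+2) * f (k+2))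
    (hR3 : ∀ j : ℕ, f (2*j+4) * b (2*j+3) = ((j : ℝ)+2) * b (2*j+2)) :
    ∀ n m : ℕ, ((m / 2 : ℕ) : ℝ) * (ψ n).coeff m
      = ((n / 2 : ℕ) : ℝ) * (ψ n).coeff m + f n * (ψ (n-2)).coeff m := by
  have hb1 : b 1 ≠ 0 := hbne 1 (by omega)
  have hb2 : b 2 ≠ 0 := hbne 2 (by omega)
  intro n
  induction n using Nat.strong_induction_on with
  | _ n ih =>
    match n with
    | 0 =>
      intro m
      rw [hψ0, hf0]
      match m with
      | 0 => norm_num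
      | (m+1) => simp [Polynomial.coeff_one]
    | 1 =>
      intro m
      rw [hf1, c1 b ψ hψ1]
      match m with
      | 0 => norm_num
      | 1 => norm_num
      | (m+2) => rw [if_neg (by omega)]; norm_num
    | 2 =>
      intro m
      rw [c2 b ψ hψ0 hψ1 hψ hb0 hb1]
      match m with
      | 0 =>
        rw [hψ0]
        norm_num
        field_simp
        linarith [hf2]
      | 1 => norm_num [hψ0, Polynomial.coeff_one]
      | 2 => norm_num [hψ0, Polynomial.coeff_one]
      | (m+3) => rw [if_neg (by omega), if_neg (by omega)]; norm_num [hψ0, Polynomial.coeff_one]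
    | 3 =>
      intro m
      rw [c3 b ψ hψ0 hψ1 hψ hb0 hb1 hb2, c1 b ψ hψ1]
      match m with
      | 0 => norm_num
      | 1 =>
        norm_num
        rw [show f 3 = (b 0 ^ 2 + b 1 ^ 2) / (b 1 * b 2) from by
          rw [eq_div_iff (mul_ne_zero hb1 hb2)]; exact hf3]
        field_simp
        ring
      | 2 => norm_num
      | 3 => norm_num
      | (m+4) => rw [if_neg (by omega), if_neg (by omega), if_neg (by omega)]; norm_num
    | (k+4) =>
      intro m
      have hb3 : b (k+3) ≠ 0 := hbne (k+3) (by omega)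
      by_cases hpar : m % 2 = (k+4) % 2
      case neg =>
        rw [parity b ψ hψ0 hψ1 hψ hbne (k+4) m hpar,
          parity b ψ hψ0 hψ1 hψ hbne (k+4-2) m (by omega)]
        ring
      case pos =>
        simp only [show k+4-2 = k+2 from rfl]
        match m with
        | 0 =>
          obtain ⟨j, rfl⟩ : ∃ j, k = 2*j := ⟨k/2, by omega⟩
          have h1 := coeff_rec b ψ hψ (2*j+3) (by omega) 0
          rw [Polynomial.mul_coeff_zero, coeff_X_zero, zero_mul] at h1
          simp only [show 2*j+3-1 = 2*j+2 from rfl, show 2*j+3+1 = 2*j+4 from rfl] at h1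
          have he4 : ((2*j+4) / 2 : ℕ) = j + 2 := by omega
          rw [he4]
          have key : b (2*j+3) * (((0/2 : ℕ) : ℝ) * (ψ (2*j+4)).coeff 0)
              = b (2*j+3) * (((j:ℝ)+2) * (ψ (2*j+4)).coeff 0
                  + f (2*j+4) * (ψ (2*j+2)).coeff 0) := by
            linear_combination (-((j:ℝ)+2)) * h1 - ((ψ (2*j+2)).coeff 0) * hR3 j
          have := mul_left_cancel₀ hb3 key
          push_cast at this ⊢
          linarith [this]
        | (m'+1) =>
          have h1 := coeff_rec b ψ hψ (k+3) (by omega) (m'+1)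
          rw [coeff_X_mul] at h1
          simp only [show k+3-1 = k+2 from rfl, show k+3+1 = k+4 from rfl] at h1
          have h2 := ih (k+3) (by omega) m'
          have h3 := ih (k+2) (by omega) (m'+1)
          simp only [show k+3-2 = k+1 from rfl] at h2
          simp only [show k+2-2 = k from rfl] at h3
          have h4 := coeff_rec b ψ hψ (k+1) (by omega) (m'+1)
          rw [coeff_X_mul] at h4
          simp only [show k+1-1 = k from rfl] at h4
          have hr1 := hR1 k
          have hr2 := hR2 k
          rcases Nat.even_or_odd k with ⟨j, hj⟩ | ⟨j, hj⟩
          · -- k even, m' odd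
            obtain ⟨i, rfl⟩ : ∃ i, m' = 2*i+1 := ⟨m'/2, by omega⟩
            subst hj
            rw [show ((2*i+1+1)/2 : ℕ) = i+1 by omega]
            rw [show ((2*i+1)/2 : ℕ) = i by omega] at h2
            rw [show ((2*i+1+1)/2 : ℕ) = i+1 by omega] at h3
            rw [show ((j+j+4)/2 : ℕ) = j+2 by omega]
            rw [show ((j+j+3)/2 : ℕ) = j+1 by omega] at h2
            rw [show ((j+j+2)/2 : ℕ) = j+1 by omega] at h3
            have key : b (j+j+3) * (((i:ℝ)+1) * (ψ (j+j+4)).coeff (2*i+1+1))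
                = b (j+j+3) * (((j:ℝ)+2) * (ψ (j+j+4)).coeff (2*i+1+1)
                    + f (j+j+4) * (ψ (j+j+2)).coeff (2*i+1+1)) := by
              push_cast at h1 h2 h3 h4 ⊢
              linear_combination ((i:ℝ)+1-((j:ℝ)+2)) * h1 + h2 - b (j+j+2) * h3
                - f (j+j+3) * h4 - ((ψ (j+j+2)).coeff (2*i+1+1)) * hr1
                + ((ψ (j+j)).coeff (2*i+1+1)) * hr2
            have := mul_left_cancel₀ hb3 key
            push_cast at this ⊢
            linarith [this]
          · -- k odd, m' even
            obtain ⟨i, rfl⟩ : ∃ i, m' = 2*i := ⟨m'/2, by omega⟩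
            subst hj
            rw [show ((2*i+1)/2 : ℕ) = i by omega]
            rw [show ((2*i)/2 : ℕ) = i by omega] at h2
            rw [show ((2*i+1)/2 : ℕ) = i by omega] at h3
            rw [show ((2*j+1+4)/2 : ℕ) = j+2 by omega]
            rw [show ((2*j+1+3)/2 : ℕ) = j+2 by omega] at h2
            rw [show ((2*j+1+2)/2 : ℕ) = j+1 by omega] at h3
            have key : b (2*j+1+3) * ((i:ℝ) * (ψ (2*j+1+4)).coeff (2*i+1))
                = b (2*j+1+3) * (((j:ℝ)+2) * (ψ (2*j+1+4)).coeff (2*i+1)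
                    + f (2*j+1+4) * (ψ (2*j+1+2)).coeff (2*i+1)) := by
              push_cast at h1 h2 h3 h4 ⊢
              linear_combination ((i:ℝ)-((j:ℝ)+2)) * h1 + h2 - b (2*j+1+2) * h3
                - f (2*j+1+3) * h4 - ((ψ (2*j+1+2)).coeff (2*i+1)) * hr1
                + ((ψ (2*j+1)).coeff (2*i+1)) * hr2
            have := mul_left_cancel₀ hb3 key
            push_cast at this ⊢
            linarith [this]

end psis


lemma vext_eq (v : ℕ → ℝ) (n : ℤ) (m : ℕ) (h : n = (m:ℤ)) : vext v n = v m := by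
  subst h; simp [vext]

lemma two_step_odd (v : ℕ → ℝ) (h3 : v 3 = 2 * v 1)
    (hrec : ∀ n : ℕ, 4 ≤ n → v n = 2 * v (n-2) - v (n-4)) :
    ∀ p : ℕ, v (2*p+1) = ((p:ℝ)+1) * v 1 := by
  intro p
  induction p using Nat.strong_induction_on with
  | _ p ih =>
    match p with
    | 0 => norm_num
    | 1 => rw [show 2*1+1 = 3 from rfl, h3]; norm_num
    | (p+2) =>
      have h1 := ih (p+1) (by omega)
      have h2 := ih p (by omega)
      have hr := hrec (2*(p+2)+1) (by omega)
      rw [show 2*(p+2)+1-2 = 2*(p+1)+1 from by omega, show 2*(p+2)+1-4 = 2*p+1 from by omega] at hr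
      rw [hr, h1, h2]
      push_cast
      ring

lemma two_step_even (v : ℕ → ℝ) (hv0 : v 0 = 1)
    (hrec : ∀ n : ℕ, 4 ≤ n → v n = 2 * v (n-2) - v (n-4)) :
    ∀ m : ℕ, v (2*m) = (m:ℝ) * v 2 - ((m:ℝ) - 1) := by
  intro p
  induction p using Nat.strong_induction_on with
  | _ p ih =>
    match p with
    | 0 => simpa using hv0
    | 1 => norm_num
    | (p+2) =>
      have h1 := ih (p+1) (by omega)
      have h2 := ih p (by omega)
      have hr := hrec (2*(p+2)) (by omega)
      rw [show 2*(p+2)-2 = 2*(p+1) from by omega, show 2*(p+2)-4 = 2*p from by omega] at hr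
      rw [hr, h1, h2]
      push_cast
      ring


set_option maxHeartbeats 1000000 in
theorem stmt_1 (v : ℕ → ℝ) (hv0 : v 0 = 1) (hmono : ∀ n : ℕ, v n ≤ v (n + 1))
    (hcompat : ∀ n p : ℤ, 2 ≤ n → 1 ≤ p → 2 * p ≤ n →
      vext v (n - 2) * vext v (2 * p - 1) + vext v (2 * p - 3) * vext v (n - 2 * p) =
        vext v n * vext v (2 * p - 3) + vext v (2 * p - 1) * vext v (n - 2 * p))
    (ε : ℕ → ℝ) (hε1 : ε 1 = 1)
    (hεk : ∀ k : ℕ, 2 ≤ k →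
      ε k = v (k - 1) / (Nat.factorial k : ℝ)
        - ∑ j ∈ Finset.Icc 1 (k - 1), ε j / (Nat.factorial (k - j) : ℝ))
    (b : ℕ → ℝ) (hb0 : 0 < b 0)
    (hbn : ∀ n : ℕ, 2 ≤ n →
      b (n - 1) = b 0 * Real.sqrt (v (n - 1) * (v n - v (n - 2)) / v 1))
    (ψ : ℕ → Polynomial ℝ) (hψ0 : ψ 0 = 1) (hψ1 : ψ 1 = C (1 / b 0) * X)
    (hψ : ∀ n : ℕ, 1 ≤ n →
      C (b n) * ψ (n + 1) = X * ψ n - C (b (n - 1)) * ψ (n - 1)) :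
    (∃ δ β : ℕ → ℝ,
        B1bar ε (ψ 2) = C (δ 2) * X * ψ 1 ∧
        ∀ n : ℕ, 3 ≤ n →
          B1bar ε (ψ n) = C (δ n) * X * ψ (n - 1) + C (β n) * ψ (n - 2)) ↔
      ((∀ p : ℕ, 1 ≤ p → v (2 * p + 1) = ((p : ℝ) + 1) * v 1) ∧
       (∀ m : ℕ, 2 ≤ m → v (2 * m) = (m : ℝ) * v 2 - ((m : ℝ) - 1))) := by
  have hb0' : b 0 ≠ 0 := ne_of_gt hb0
  have hv1 : (1:ℝ) ≤ v 1 := hv0 ▸ hmono 0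
  have hv1' : v 1 ≠ 0 := by linarith
  have hv2 : v 1 ≤ v 2 := hmono 1
  have hsum := sum_eps v ε hε1 hεk hv0
  have hlam := coeff_B1bar v ε hv0 hsum hε1
  constructor
  · rintro ⟨δ, β, -, hn⟩
    -- first derive b 1, b 2, b 3 nonzero
    have hb1 : b 1 ≠ 0 := by
      intro h
      have hr := coeff_rec b ψ hψ 1 le_rfl 2
      rw [h, zero_mul, coeff_X_mul, c1 b ψ hψ1, hψ0] at hr
      norm_num [Polynomial.coeff_one] at hr
      exact hb0' hr.symm
    have hb2 : b 2 ≠ 0 := by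
      intro h
      have hr := coeff_rec b ψ hψ 2 (by omega) 3
      rw [h, zero_mul, coeff_X_mul, c2 b ψ hψ0 hψ1 hψ hb0' hb1, c1 b ψ hψ1] at hr
      norm_num at hr
      tauto
    have hb3 : b 3 ≠ 0 := by
      intro h
      have hr := coeff_rec b ψ hψ 3 (by omega) 4
      rw [h, zero_mul, coeff_X_mul, c3 b ψ hψ0 hψ1 hψ hb0' hb1 hb2,
        c2 b ψ hψ0 hψ1 hψ hb0' hb1] at hr
      norm_num at hr
      tauto
    -- squares of b1 b2
    have harg1 : (0:ℝ) ≤ v 1 * (v 2 - v 0) / v 1 := by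
      apply div_nonneg _ (by linarith)
      have := hmono 1
      nlinarith [hmono 1, hv0]
    have harg2 : (0:ℝ) ≤ v 2 * (v 3 - v 1) / v 1 := by
      apply div_nonneg _ (by linarith)
      have h23 := hmono 2
      nlinarith
    have hsq1 : b 1 ^ 2 = b 0 ^ 2 * (v 1 * (v 2 - v 0) / v 1) := by
      have h := hbn 2 le_rfl
      norm_num at h
      rw [h, mul_pow, Real.sq_sqrt harg1]
    have hsq2 : b 2 ^ 2 = b 0 ^ 2 * (v 2 * (v 3 - v 1) / v 1) := by
      have h := hbn 3 (by omega)
      norm_num at h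
      rw [h, mul_pow, Real.sq_sqrt harg2]
    -- the n = 4 equation
    have E := hn 4 (by omega)
    norm_num at E
    have e0 := congrArg (fun q : Polynomial ℝ => q.coeff 0) E
    have e2 := congrArg (fun q : Polynomial ℝ => q.coeff 2) E
    have e4 := congrArg (fun q : Polynomial ℝ => q.coeff 4) E
    simp only [hlam, coeff_add, mul_assoc, coeff_C_mul] at e0 e2 e4
    rw [Polynomial.mul_coeff_zero, coeff_X_zero, zero_mul] at e0
    rw [coeff_X_mul] at e2 e4
    rw [c4 b ψ hψ0 hψ1 hψ hb0' hb1 hb2 hb3] at e0 e2 e4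
    rw [c3 b ψ hψ0 hψ1 hψ hb0' hb1 hb2] at e2 e4
    rw [c2 b ψ hψ0 hψ1 hψ hb0' hb1] at e0 e2 e4
    norm_num [lam] at e0 e2 e4
    have hβ40 : β 4 = 0 := by
      rcases e0 with h|h|h
      · exact h
      · exact absurd h hb0'
      · exact absurd h hb1
    rw [hβ40] at e2
    field_simp at e2 e4
    have key : (v 1 - 2) * (b 0^2 + b 1^2 + b 2^2) * (b 0 * b 1 * b 2)
        = (v 3 - 4) * (b 0^2 + b 1^2) * (b 0 * b 1 * b 2) := by
      linear_combination (b 0 * b 1 * b 2) * (-e2 - (b 0^2 + b 1^2) * e4)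
    have key' := mul_right_cancel₀ (by simp [hb0', hb1, hb2] : b 0 * b 1 * b 2 ≠ (0:ℝ)) key
    have h1 : b 1^2 = b 0^2 * (v 2 - 1) := by
      rw [hsq1, hv0]
      field_simp
    have h2 : b 2^2 * v 1 = b 0^2 * (v 2 * (v 3 - v 1)) := by
      rw [hsq2]
      field_simp
    have h2v : b 0^2 * ((v 1 - 2) * (v 2 * v 3)) = b 0^2 * ((v 3 - 4) * (v 2 * v 1)) := by
      linear_combination v 1 * key' - (v 1 - 2) * h2 - ((v 1 - 2) - (v 3 - 4)) * v 1 * h1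
    have h2v' := mul_left_cancel₀ (by positivity : (b 0^2 : ℝ) ≠ 0) h2v
    have h0 : v 2 * (4 * v 1 - 2 * v 3) = 0 := by linear_combination h2v'
    have h3eq : v 3 = 2 * v 1 := by
      rcases mul_eq_zero.mp h0 with h | h
      · linarith
      · linarith
    -- now the recursion from hcompat
    have hrec : ∀ n : ℕ, 4 ≤ n → v n = 2 * v (n-2) - v (n-4) := by
      intro n hn4
      have h := hcompat (n:ℤ) 2 (by exact_mod_cast by omega) (by norm_num) (by exact_mod_cast by omega)
      rw [vext_eq v ((n:ℤ)-2) (n-2) (by omega), vext_eq v (2*2-1) 3 (by norm_num),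
        vext_eq v (2*2-3) 1 (by norm_num), vext_eq v ((n:ℤ)-2*2) (n-4) (by omega),
        vext_eq v (n:ℤ) n rfl] at h
      rw [h3eq] at h
      have := mul_left_cancel₀ hv1' (show v 1 * v n = v 1 * (2 * v (n-2) - v (n-4)) by
        linear_combination -h)
      linarith [this]
    exact ⟨fun p _ => two_step_odd v h3eq hrec p, fun m _ => two_step_even v hv0 hrec m⟩
  · rintro ⟨hodd', heven'⟩
    have hodd : ∀ p : ℕ, v (2*p+1) = ((p:ℝ)+1) * v 1 := by
      intro p
      match p with
      | 0 => norm_num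
      | (p+1) => exact hodd' (p+1) (by omega)
    have heven : ∀ k : ℕ, v (2*k) = (k:ℝ) * v 2 - ((k:ℝ)-1) := by
      intro k
      match k with
      | 0 => rw [show 2*0 = 0 from rfl, hv0]; norm_num
      | 1 => push_cast; ring_nf
      | (k+2) => exact heven' (k+2) (by omega)
    have hv2gt : 1 < v 2 := by
      have h3 := hodd 1
      have h4 := heven 2
      have h34 := hmono 3
      norm_num at h3 h4
      linarith
    have hvge1 : ∀ n, 1 ≤ v n := by
      intro n
      induction n with
      | zero => rw [hv0]
      | succ n ih => linarith [hmono n]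
    set c : ℝ := b 0^2 * (v 2 - 1) with hc
    have hcpos : 0 < c := mul_pos (pow_pos hb0 2) (by linarith)
    have hbsqrt : ∀ m : ℕ, 1 ≤ m →
        b m = b 0 * Real.sqrt (v m * (v (m+1) - v (m-1)) / v 1) := by
      intro m hm
      have h := hbn (m+1) (by omega)
      simpa using h
    have hgap : ∀ m : ℕ, 1 ≤ m → 0 < v (m+1) - v (m-1) := by
      intro m hm
      rcases Nat.even_or_odd m with ⟨j, hj⟩ | ⟨j, hj⟩
      · -- m = j + j, j ≥ 1
        have hj1 : 1 ≤ j := by omega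
        have e1 : m + 1 = 2*j+1 := by omega
        have e2 : m - 1 = 2*(j-1)+1 := by omega
        rw [e1, e2, hodd j, hodd (j-1)]
        have : ((j-1 : ℕ):ℝ) = (j:ℝ) - 1 := by
          push_cast [Nat.cast_sub hj1]; ring
        rw [this]
        nlinarith [hv1]
      · have e1 : m + 1 = 2*(j+1) := by omega
        have e2 : m - 1 = 2*j := by omega
        rw [e1, e2, heven (j+1), heven j]
        push_cast
        linarith
    have hbpos : ∀ m : ℕ, 0 < b m := by
      intro m
      match m with
      | 0 => exact hb0
      | (m+1) =>
        rw [hbsqrt (m+1) (by omega)]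
        apply mul_pos hb0
        apply Real.sqrt_pos.mpr
        apply div_pos _ (by linarith : (0:ℝ) < v 1)
        exact mul_pos (by linarith [hvge1 (m+1)]) (hgap (m+1) (by omega))
    have hbne : ∀ n : ℕ, 1 ≤ n → b n ≠ 0 := fun n _ => ne_of_gt (hbpos n)
    have hbsq : ∀ m : ℕ, 1 ≤ m →
        b m ^ 2 = b 0^2 * (v m * (v (m+1) - v (m-1)) / v 1) := by
      intro m hm
      rw [hbsqrt m hm, mul_pow, Real.sq_sqrt]
      apply div_nonneg _ (by linarith : (0:ℝ) ≤ v 1)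
      exact le_of_lt (mul_pos (by linarith [hvge1 m]) (hgap m hm))
    have hbo : ∀ j : ℕ, b (2*j+1)^2 = c * ((j:ℝ)+1) := by
      intro j
      rw [hbsq (2*j+1) (by omega), show 2*j+1-1 = 2*j from rfl,
        show 2*j+1+1 = 2*(j+1) from by omega, hodd j, heven (j+1), heven j]
      push_cast
      field_simp
      ring
    have hbe : ∀ j : ℕ, b (2*j)^2 = b 0^2 + c * (j:ℝ) := by
      intro j
      match j with
      | 0 => norm_num
      | (j+1) =>
        rw [show 2*(j+1) = 2*j+2 from by omega, hbsq (2*j+2) (by omega),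
          show 2*j+2-1 = 2*j+1 from rfl, show 2*j+2+1 = 2*(j+1)+1 from by omega,
          show (2*j+2 : ℕ) = 2*(j+1) from by omega, hodd (j+1), hodd j, heven (j+1)]
        push_cast
        field_simp
        ring
    set G : ℕ → ℝ := fun k => ∑ i ∈ Finset.range (k+1), b i^2 with hGdef
    have hGrec : ∀ k : ℕ, G (k+1) = G k + b (k+1)^2 := by
      intro k
      simp only [hGdef]
      exact Finset.sum_range_succ _ _
    have hG0 : G 0 = b 0^2 := by simp [hGdef]
    have hGcl : ∀ j : ℕ, G (2*j) = ((j:ℝ)+1)*b 0^2 + c*(j:ℝ)*((j:ℝ)+1) ∧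
        G (2*j+1) = ((j:ℝ)+1)*b 0^2 + c*((j:ℝ)+1)^2 := by
      intro j
      induction j with
      | zero =>
        constructor
        · rw [show 2*0 = 0 from rfl, hG0]; norm_num
        · rw [show 2*0+1 = 0+1 from rfl, hGrec 0, hG0, hbo 0]; norm_num
      | succ j ih =>
        have he : G (2*(j+1)) = ((j:ℝ)+2)*b 0^2 + c*((j:ℝ)+1)*((j:ℝ)+2) := by
          rw [show 2*(j+1) = (2*j+1)+1 from by omega, hGrec, ih.2,
            show 2*j+1+1 = 2*(j+1) from by omega, hbe (j+1)]
          push_cast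
          ring
        constructor
        · rw [he]; push_cast; ring
        · rw [show 2*(j+1)+1 = (2*(j+1))+1 from rfl, hGrec, he,
            show 2*(j+1)+1 = 2*(j+1)+1 from rfl, hbo (j+1)]
          push_cast
          ring
    set f : ℕ → ℝ := fun n => if n ≤ 1 then 0 else G (n-2) / (b (n-2) * b (n-1)) with hfdef
    have hfof : ∀ k : ℕ, f (k+2) = G k / (b k * b (k+1)) := by
      intro k
      simp [hfdef, show ¬ k+2 ≤ 1 by omega]
    have hf0 : f 0 = 0 := by simp [hfdef]
    have hf1 : f 1 = 0 := by simp [hfdef]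
    have hf2 : f 2 * b 1 = b 0 := by
      rw [show (2:ℕ) = 0+2 from rfl, hfof 0, hG0]
      field_simp [hbne 1 le_rfl]
    have hf3 : f 3 * (b 1 * b 2) = b 0 ^ 2 + b 1 ^ 2 := by
      rw [show (3:ℕ) = 1+2 from rfl, hfof 1, hGrec 0, hG0]
      field_simp [hbne 1 le_rfl, hbne 2 (by omega)]
    have hR1 : ∀ k : ℕ, f (k+4) * b (k+3) = b (k+2) + f (k+3) * b (k+1) := by
      intro k
      rw [show k+4 = (k+2)+2 from by omega, hfof (k+2), show k+3 = (k+1)+2 from by omega,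
        hfof (k+1), hGrec (k+1)]
      have h1 := hbne (k+1) (by omega)
      have h2 := hbne (k+2) (by omega)
      have h3 := hbne (k+3) (by omega)
      field_simp
      ring
    have hR2 : ∀ k : ℕ, f (k+3) * b k = b (k+2) * f (k+2) := by
      intro k
      have key : G (k+1) * (b k)^2 = G k * (b (k+2))^2 := by
        rcases Nat.even_or_odd k with ⟨j, hj⟩ | ⟨j, hj⟩
        · have e0 : k = 2*j := by omega
          rw [e0, show 2*j+1 = 2*j+1 from rfl, (hGcl j).2, (hGcl j).1, hbe j,
            show 2*j+2 = 2*(j+1) from by omega, hbe (j+1)]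
          push_cast
          ring
        · have e0 : k = 2*j+1 := by omega
          rw [e0, show 2*j+1+1 = 2*(j+1) from by omega, (hGcl (j+1)).1, (hGcl j).2, hbo j,
            show 2*j+1+2 = 2*(j+1)+1 from by omega, hbo (j+1)]
          push_cast
          ring
      rw [show k+3 = (k+1)+2 from by omega, hfof (k+1), hfof k]
      have h0 : b k ≠ 0 := by
        match k with
        | 0 => exact ne_of_gt hb0
        | (k+1) => exact hbne (k+1) (by omega)
      have h1 := hbne (k+1) (by omega)
      have h2 := hbne (k+2) (by omega)
      field_simp
      linear_combination key
    have hR3 : ∀ j : ℕ, f (2*j+4) * b (2*j+3) = ((j:ℝ)+2) * b (2*j+2) := by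
      intro j
      have key : G (2*(j+1)) = ((j:ℝ)+2) * b (2*(j+1))^2 := by
        rw [(hGcl (j+1)).1, hbe (j+1)]
        push_cast
        ring
      rw [show 2*j+4 = (2*j+2)+2 from by omega, hfof (2*j+2),
        show (2*j+2 : ℕ) = 2*(j+1) from by omega]
      have h2 := hbne (2*(j+1)) (by omega)
      have h3 := hbne (2*j+3) (by omega)
      rw [show 2*(j+1)+1 = 2*j+3 from by omega]
      field_simp
      linear_combination key
    have hlamθ : ∀ m : ℕ, lam v m
        = (if m % 2 = 0 then v 1 - 2 else v 2 - 3) * ((m/2 : ℕ):ℝ) := by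
      intro m
      rcases Nat.even_or_odd m with ⟨p, hp⟩ | ⟨p, hp⟩
      · match p, hp with
        | 0, hp => subst hp; simp [lam]
        | (p+1), hp =>
          have e0 : m = 2*(p+1) := by omega
          subst e0
          rw [lam, if_neg (by omega), if_pos (by omega),
            show 2*(p+1)-1 = 2*p+1 from by omega, hodd p,
            show (2*(p+1))/2 = p+1 from by omega]
          push_cast
          ring
      · have e0 : m = 2*p+1 := by omega
        subst e0
        rw [lam, if_neg (by omega), if_neg (by omega),
          show 2*p+1-1 = 2*p from by omega, heven p,
          show (2*p+1)/2 = p from by omega]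
        push_cast
        ring
    have hcore := core b ψ hψ0 hψ1 hψ hb0' hbne f hf0 hf1 hf2 hf3 hR1 hR2 hR3
    have hBeq : ∀ n : ℕ, 2 ≤ n → B1bar ε (ψ n)
        = C ((if n % 2 = 0 then v 1 - 2 else v 2 - 3) * ((n/2 : ℕ):ℝ)) * ψ n
          + C ((if n % 2 = 0 then v 1 - 2 else v 2 - 3) * f n) * ψ (n-2) := by
      intro n hn2
      apply Polynomial.ext
      intro m
      rw [hlam, coeff_add, coeff_C_mul, coeff_C_mul]
      by_cases hp : m % 2 = n % 2
      · rw [hlamθ m, show (if m % 2 = 0 then v 1 - 2 else v 2 - 3)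
            = (if n % 2 = 0 then v 1 - 2 else v 2 - 3) from by rw [hp]]
        have hco := hcore n m
        linear_combination (if n % 2 = 0 then v 1 - 2 else v 2 - 3) * hco
      · rw [parity b ψ hψ0 hψ1 hψ hbne n m hp,
          parity b ψ hψ0 hψ1 hψ hbne (n-2) m (by omega), hlamθ m]
        ring
    refine ⟨fun n => (if n % 2 = 0 then v 1 - 2 else v 2 - 3) * ((n/2 : ℕ):ℝ) / b (n-1),
      fun n => (if n % 2 = 0 then v 1 - 2 else v 2 - 3) * f n
        - ((if n % 2 = 0 then v 1 - 2 else v 2 - 3) * ((n/2 : ℕ):ℝ) / b (n-1)) * b (n-2),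
      ?_, ?_⟩
    · -- the n = 2 case
      rw [hBeq 2 le_rfl]
      have hX : X * ψ 1 = C (b 1) * ψ 2 + C (b 0) * ψ 0 := by
        have h := hψ 1 le_rfl
        norm_num at h
        linear_combination -h
      have hb1 := hbne 1 le_rfl
      simp only [show (2:ℕ) % 2 = 0 from rfl, reduceIte, show (2:ℕ)/2 = 1 from rfl,
        show (2:ℕ)-1 = 1 from rfl, show (2:ℕ)-2 = 0 from rfl, Nat.cast_one, mul_one]
      rw [mul_assoc, hX, mul_add, ← mul_assoc, ← mul_assoc, ← C_mul, ← C_mul]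
      have s1 : (v 1 - 2) / b 1 * b 1 = v 1 - 2 := by field_simp
      have s2 : (v 1 - 2) / b 1 * b 0 = (v 1 - 2) * f 2 := by
        rw [← hf2]; field_simp
      rw [s1, s2]
    · -- the n ≥ 3 case
      intro n hn3
      obtain ⟨k, rfl⟩ : ∃ k, n = k + 3 := ⟨n - 3, by omega⟩
      rw [show k+3-1 = k+2 from by omega, show k+3-2 = k+1 from by omega,
        hBeq (k+3) (by omega)]
      have hX : X * ψ (k+2) = C (b (k+2)) * ψ (k+3) + C (b (k+1)) * ψ (k+1) := by
        have h := hψ (k+2) (by omega)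
        simp only [show k+2-1 = k+1 from rfl, show k+2+1 = k+3 from rfl] at h
        linear_combination -h
      simp only [show k+3-1 = k+2 from rfl, show k+3-2 = k+1 from rfl]
      rw [mul_assoc, hX, mul_add, ← mul_assoc, ← mul_assoc, ← C_mul, ← C_mul]
      have hb2 := hbne (k+2) (by omega)
      have s1 : (if (k+3) % 2 = 0 then v 1 - 2 else v 2 - 3) * (((k+3)/2 : ℕ):ℝ) / b (k+2) * b (k+2)
          = (if (k+3) % 2 = 0 then v 1 - 2 else v 2 - 3) * (((k+3)/2 : ℕ):ℝ) := by
        field_simp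
      rw [s1, add_assoc, ← add_mul, ← C_add,
        show (if (k+3) % 2 = 0 then v 1 - 2 else v 2 - 3) * (((k+3)/2 : ℕ):ℝ) / b (k+2) * b (k+1)
            + ((if (k+3) % 2 = 0 then v 1 - 2 else v 2 - 3) * f (k+3)
              - (if (k+3) % 2 = 0 then v 1 - 2 else v 2 - 3) * (((k+3)/2 : ℕ):ℝ) / b (k+2) * b (k+1))
          = (if (k+3) % 2 = 0 then v 1 - 2 else v 2 - 3) * f (k+3) from by ring]
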